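/- For integers n ≥ p ≥ q ≥ r ≥ 0, the polynomial E_q^{p−r} − E_p^{q−r}·E_r^{p−q} lies in S; equivalently its substitution x_j ↦ x_j² is a sum of squares of polynomials (Lyapunov-type Maclaurin inequality as a sum of squares). -/

import Mathlib

open Finset MvPolynomial

/-- The normalized `m`-th elementary symmetric polynomial `E_m`. -/
noncomputable def esym' (n : ℕ) (m : ℕ) : MvPolynomial (Fin n) ℝ :=
  ((n.choose m : ℝ))⁻¹ • ∑ s ∈ powersetCard m (univ : Finset (Fin n)), ∏ i ∈ s, X i

section SOS
variable {R : Type*} [CommRing R]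

theorem isSumSq_mul_self (a : R) : IsSumSq (a * a) := by
  simpa using IsSumSq.sq_add a 0 IsSumSq.zero

theorem IsSumSq.mul_self_left {b : R} (a : R) (hb : IsSumSq b) : IsSumSq (a * a * b) := by
  induction hb with
  | zero => simpa using IsSumSq.zero
  | sq_add d hT ih =>
    rw [mul_add]
    refine IsSumSq.add ?_ ih
    have : a * a * (d * d) = (a * d) * (a * d) := by ring
    rw [this]; exact isSumSq_mul_self _

theorem IsSumSq.mul' {a b : R} (ha : IsSumSq a) (hb : IsSumSq b) : IsSumSq (a * b) := by
  induction ha with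
  | zero => simpa using IsSumSq.zero
  | sq_add c hS ih =>
    rw [add_mul]
    exact (hb.mul_self_left c).add ih
  
theorem IsSumSq.pow' {a : R} (ha : IsSumSq a) (k : ℕ) : IsSumSq (a ^ k) := by
  induction k with
  | zero => simpa using isSumSq_mul_self (1 : R)
  | succ k ih => rw [pow_succ]; exact ih.mul' ha

theorem isSumSq_sq (a : R) : IsSumSq (a ^ 2) := by
  rw [sq]; exact isSumSq_mul_self a

theorem IsSumSq.sum' {ι : Type*} (s : Finset ι) (f : ι → R) (h : ∀ i ∈ s, IsSumSq (f i)) :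
    IsSumSq (∑ i ∈ s, f i) := by
  classical
  induction s using Finset.induction_on with
  | empty => simpa using IsSumSq.zero
  | insert _ _ hx ih =>
    rw [Finset.sum_insert hx]
    exact (h _ (Finset.mem_insert_self _ _)).add
      (ih fun i hi => h i (Finset.mem_insert_of_mem hi))
end SOS

theorem isSumSq_smul_of_nonneg {σ : Type*} {r : ℝ} (hr : 0 ≤ r) {p : MvPolynomial σ ℝ}
    (hp : IsSumSq p) : IsSumSq (r • p) := by
  rw [smul_eq_C_mul]
  have : (C r : MvPolynomial σ ℝ) = C (Real.sqrt r) * C (Real.sqrt r) := by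
    rw [← map_mul, Real.mul_self_sqrt hr]
  rw [this]
  exact (isSumSq_mul_self _).mul' hp

section ES
variable {n : ℕ}

/-- Elementary symmetric polynomial over a finite set of variables, with `ℤ` index
(zero for negative index). -/
noncomputable def es (S : Finset (Fin n)) (c : ℤ) : MvPolynomial (Fin n) ℝ :=
  if 0 ≤ c then ∑ T ∈ powersetCard c.toNat S, ∏ i ∈ T, X i else 0

theorem es_neg {S : Finset (Fin n)} {c : ℤ} (hc : c < 0) : es S c = 0 := by
  rw [es, if_neg (by omega)]

theorem es_ofNat (S : Finset (Fin n)) (m : ℕ) :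
    es S (m : ℤ) = ∑ T ∈ powersetCard m S, ∏ i ∈ T, X i := by
  rw [es, if_pos (by positivity), Int.toNat_natCast]

theorem es_zero (S : Finset (Fin n)) : es S 0 = 1 := by
  have := es_ofNat S 0
  simpa [Finset.powersetCard_zero] using this

theorem es_of_card_lt {S : Finset (Fin n)} {c : ℤ} (hc : (S.card : ℤ) < c) : es S c = 0 := by
  rw [es, if_pos (by omega)]
  rw [Finset.powersetCard_eq_empty.2 (by omega), Finset.sum_empty]

theorem es_insert {i : Fin n} {S : Finset (Fin n)} (hi : i ∉ S) (c : ℤ) :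
    es (insert i S) c = es S c + X i * es S (c - 1) := by
  rcases lt_trichotomy c 0 with hc | hc | hc
  · rw [es_neg hc, es_neg hc, es_neg (by omega), mul_zero, add_zero]
  · subst hc
    rw [es_zero, es_zero, es_neg (by omega), mul_zero, add_zero]
  · obtain ⟨k, rfl⟩ : ∃ k : ℕ, c = (k : ℤ) + 1 := ⟨(c - 1).toNat, by omega⟩
    have h1 : ((k : ℤ) + 1 - 1) = (k : ℤ) := by ring
    rw [h1]
    have h2 : ((k : ℤ) + 1) = ((k + 1 : ℕ) : ℤ) := by push_cast; ring
    rw [h2, es_ofNat, es_ofNat, es_ofNat]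
    rw [Finset.powersetCard_succ_insert hi]
    rw [Finset.sum_union]
    · congr 1
      rw [Finset.sum_image]
      · rw [Finset.mul_sum]
        refine Finset.sum_congr rfl fun T hT => ?_
        rw [Finset.prod_insert (fun hiT => hi ((Finset.mem_powersetCard.1 hT).1 hiT))]
      · intro T hT U hU hTU
        have hiT : i ∉ T := fun h => hi ((Finset.mem_powersetCard.1 hT).1 h)
        have hiU : i ∉ U := fun h => hi ((Finset.mem_powersetCard.1 hU).1 h)
        ext x
        constructor
        · intro hx
          have : x ∈ insert i U := hTU ▸ Finset.mem_insert_of_mem hx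
          rcases Finset.mem_insert.1 this with rfl | h
          · exact absurd hx hiT
          · exact h
        · intro hx
          have : x ∈ insert i T := hTU ▸ Finset.mem_insert_of_mem hx
          rcases Finset.mem_insert.1 this with rfl | h
          · exact absurd hx hiU
          · exact h
    · rw [Finset.disjoint_left]
      intro T hT hT'
      obtain ⟨U, hU, rfl⟩ := Finset.mem_image.1 hT'
      have : i ∈ insert i U := Finset.mem_insert_self _ _
      exact (fun h => hi ((Finset.mem_powersetCard.1 hT).1 h)) this

theorem es_erase {i : Fin n} {S : Finset (Fin n)} (hi : i ∈ S) (c : ℤ) :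
    es S c = es (S.erase i) c + X i * es (S.erase i) (c - 1) := by
  conv_lhs => rw [← Finset.insert_erase hi]
  exact es_insert (Finset.notMem_erase i S) c

theorem es_empty (c : ℤ) (hc : c ≠ 0) : (es (∅ : Finset (Fin n)) c) = 0 := by
  rcases lt_or_gt_of_ne hc with h | h
  · exact es_neg h
  · exact es_of_card_lt (by simpa using h)

theorem sum_X_mul_es_erase (S : Finset (Fin n)) (c : ℤ) :
    ∑ i ∈ S, X i * es (S.erase i) c = ((c + 1 : ℤ) : MvPolynomial (Fin n) ℝ) * es S (c + 1) := by
  rcases lt_or_ge c 0 with hc | hc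
  · rcases eq_or_lt_of_le (by omega : c + 1 ≤ 0) with h0 | h0
    · rw [show c = -1 by omega]
      simp [es_neg (by omega : (-1:ℤ) < 0)]
    · rw [es_neg (by omega : c + 1 < 0)]
      simp [es_neg hc]
  · obtain ⟨k, rfl⟩ : ∃ k : ℕ, c = (k : ℤ) := ⟨c.toNat, by omega⟩
    have hc1 : ((k : ℤ) + 1) = ((k + 1 : ℕ) : ℤ) := by push_cast; ring
    rw [hc1, es_ofNat]
    have hrhs : (((k + 1 : ℕ) : ℤ) : MvPolynomial (Fin n) ℝ) *
        ∑ T ∈ powersetCard (k+1) S, ∏ i ∈ T, X i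
        = ∑ U ∈ powersetCard (k+1) S, ∑ _j ∈ U, ∏ i ∈ U, X i := by
      rw [Finset.mul_sum]
      refine Finset.sum_congr rfl fun U hU => ?_
      have hcard : U.card = k + 1 := (Finset.mem_powersetCard.1 hU).2
      rw [Finset.sum_const, hcard]
      rw [nsmul_eq_mul]
      push_cast
      ring
    rw [hrhs]
    have hlhs : ∀ i ∈ S, X i * es (S.erase i) (k : ℤ)
        = ∑ T ∈ powersetCard k (S.erase i), X i * ∏ j ∈ T, X j := by
      intro i _
      rw [es_ofNat, Finset.mul_sum]
    rw [Finset.sum_congr rfl hlhs]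
    rw [Finset.sum_sigma' S _ (fun i T => X i * ∏ j ∈ T, X j)]
    rw [Finset.sum_sigma' (powersetCard (k+1) S) _ (fun U _j => ∏ i ∈ U, X i)]
    refine Finset.sum_nbij' (fun p => ⟨insert p.1 p.2, p.1⟩) (fun p => ⟨p.2, p.1.erase p.2⟩)
      ?_ ?_ ?_ ?_ ?_
    · rintro ⟨i, T⟩ hp
      rw [Finset.mem_sigma] at hp ⊢
      obtain ⟨hiS, hT⟩ := hp
      rw [Finset.mem_powersetCard] at hT
      obtain ⟨hTsub, hTcard⟩ := hT
      have hiT : i ∉ T := fun h => (Finset.notMem_erase i S) (hTsub h)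
      refine ⟨Finset.mem_powersetCard.2 ⟨?_, ?_⟩, Finset.mem_insert_self _ _⟩
      · exact Finset.insert_subset hiS (hTsub.trans (Finset.erase_subset i S))
      · rw [Finset.card_insert_of_notMem hiT, hTcard]
    · rintro ⟨U, j⟩ hp
      rw [Finset.mem_sigma] at hp ⊢
      obtain ⟨hU, hjU⟩ := hp
      rw [Finset.mem_powersetCard] at hU
      obtain ⟨hUsub, hUcard⟩ := hU
      refine ⟨hUsub hjU, Finset.mem_powersetCard.2 ⟨?_, ?_⟩⟩
      · intro x hx
        rw [Finset.mem_erase] at hx ⊢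
        exact ⟨hx.1, hUsub hx.2⟩
      · rw [Finset.card_erase_of_mem hjU, hUcard]
        omega
    · rintro ⟨i, T⟩ hp
      rw [Finset.mem_sigma] at hp
      have hiT : i ∉ T := fun h => (Finset.notMem_erase i S) ((Finset.mem_powersetCard.1 hp.2).1 h)
      simp only [Finset.erase_insert hiT]
    · rintro ⟨U, j⟩ hp
      rw [Finset.mem_sigma] at hp
      simp only [Finset.insert_erase hp.2]
    · rintro ⟨i, T⟩ hp
      rw [Finset.mem_sigma] at hp
      have hiT : i ∉ T := fun h => (Finset.notMem_erase i S) ((Finset.mem_powersetCard.1 hp.2).1 h)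
      exact (Finset.prod_insert hiT).symm

theorem sum_es_erase (S : Finset (Fin n)) (c : ℤ) :
    ∑ i ∈ S, es (S.erase i) c = (((S.card : ℤ) - c : ℤ) : MvPolynomial (Fin n) ℝ) * es S c := by
  rcases lt_or_ge c 0 with hc | hc
  · rw [es_neg hc, mul_zero]
    exact Finset.sum_eq_zero fun i _ => es_neg hc
  obtain ⟨k, rfl⟩ : ∃ k : ℕ, c = (k : ℤ) := ⟨c.toNat, by omega⟩
  by_cases hk : k ≤ S.card
  swap
  · rw [es_of_card_lt (by omega), mul_zero]
    refine Finset.sum_eq_zero fun i hi => es_of_card_lt ?_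
    rw [Finset.card_erase_of_mem hi]
    omega
  have key : ∀ i ∈ S, es (S.erase i) (k : ℤ)
      = ∑ T ∈ (powersetCard k S).filter (fun T => i ∉ T), ∏ j ∈ T, X j := by
    intro i _
    rw [es_ofNat]
    congr 1
    ext T
    simp only [Finset.mem_powersetCard, Finset.mem_filter, Finset.subset_erase]
    tauto
  rw [Finset.sum_congr rfl key]
  have : ∀ i ∈ S, ∑ T ∈ (powersetCard k S).filter (fun T => i ∉ T), ∏ j ∈ T, X j
      = ∑ T ∈ powersetCard k S, if i ∉ T then (∏ j ∈ T, X j : MvPolynomial (Fin n) ℝ) else 0 := by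
    intro i _
    rw [Finset.sum_filter]
  rw [Finset.sum_congr rfl this, Finset.sum_comm, es_ofNat, Finset.mul_sum]
  refine Finset.sum_congr rfl fun T hT => ?_
  rw [Finset.mem_powersetCard] at hT
  rw [← Finset.sum_filter, Finset.sum_const]
  rw [show S.filter (fun i => i ∉ T) = S \ T from (Finset.sdiff_eq_filter S T).symm]
  rw [Finset.card_sdiff_of_subset hT.1, hT.2, nsmul_eq_mul]
  congr 1
  push_cast [hk]
  ring

theorem main_identity (a b : ℤ) :
    ((a * ((n:ℤ) - b) : ℤ) : MvPolynomial (Fin n) ℝ) * (es univ a * es univ b)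
      - ((((n:ℤ) - a + 1) * (b + 1) : ℤ) : MvPolynomial (Fin n) ℝ)
        * (es univ (a-1) * es univ (b+1))
    = ∑ p ∈ (univ ×ˢ univ).filter (fun p : Fin n × Fin n => p.1 < p.2),
        (X p.1 - X p.2)^2 *
          (es ((univ.erase p.1).erase p.2) (a-1) * es ((univ.erase p.1).erase p.2) (b-1)
           - es ((univ.erase p.1).erase p.2) (a-2) * es ((univ.erase p.1).erase p.2) b) := by
  have hcard : ((univ : Finset (Fin n)).card : ℤ) = (n : ℤ) := by
    rw [Finset.card_univ, Fintype.card_fin]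
  have h1 : ∑ i ∈ univ, X i * es (univ.erase i) (a-1)
      = ((a : ℤ) : MvPolynomial (Fin n) ℝ) * es univ a := by
    have := sum_X_mul_es_erase (univ : Finset (Fin n)) (a-1)
    rwa [show a - 1 + 1 = a from by ring] at this
  have h4 : ∑ j ∈ univ, X j * es (univ.erase j) b
      = ((b + 1 : ℤ) : MvPolynomial (Fin n) ℝ) * es univ (b+1) := by
    exact sum_X_mul_es_erase (univ : Finset (Fin n)) b
  have h2 : ∑ j ∈ univ, es (univ.erase j) b
      = (((n:ℤ) - b : ℤ) : MvPolynomial (Fin n) ℝ) * es univ b := by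
    have := sum_es_erase (univ : Finset (Fin n)) b
    rwa [hcard] at this
  have h3 : ∑ i ∈ univ, es (univ.erase i) (a-1)
      = (((n:ℤ) - a + 1 : ℤ) : MvPolynomial (Fin n) ℝ) * es univ (a-1) := by
    have := sum_es_erase (univ : Finset (Fin n)) (a-1)
    rw [hcard] at this
    rwa [show (n:ℤ) - (a - 1) = (n:ℤ) - a + 1 from by ring] at this
  have hprod :
      (∑ i ∈ univ, X i * es (univ.erase i) (a-1)) * (∑ j ∈ univ, es (univ.erase j) b)
        - (∑ i ∈ univ, es (univ.erase i) (a-1)) * (∑ j ∈ univ, X j * es (univ.erase j) b)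
      = ((a * ((n:ℤ) - b) : ℤ) : MvPolynomial (Fin n) ℝ) * (es univ a * es univ b)
        - ((((n:ℤ) - a + 1) * (b + 1) : ℤ) : MvPolynomial (Fin n) ℝ)
          * (es univ (a-1) * es univ (b+1)) := by
    rw [h1, h2, h3, h4]
    push_cast
    ring
  rw [← hprod]
  -- expand products of sums into a double sum of f i j
  rw [Finset.sum_mul_sum, Finset.sum_mul_sum, ← Finset.sum_sub_distrib]
  have hstep : ∀ i ∈ (univ : Finset (Fin n)),
      (∑ j ∈ univ, (X i * es (univ.erase i) (a-1)) * es (univ.erase j) b)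
        - (∑ j ∈ univ, es (univ.erase i) (a-1) * (X j * es (univ.erase j) b))
      = ∑ j ∈ univ, (X i - X j) * (es (univ.erase i) (a-1) * es (univ.erase j) b) := by
    intro i _
    rw [← Finset.sum_sub_distrib]
    exact Finset.sum_congr rfl fun j _ => by ring
  rw [Finset.sum_congr rfl hstep]
  rw [← Finset.sum_product']
  set f : Fin n × Fin n → MvPolynomial (Fin n) ℝ :=
    fun p => (X p.1 - X p.2) * (es (univ.erase p.1) (a-1) * es (univ.erase p.2) b) with hf
  rw [← Finset.sum_filter_add_sum_filter_not (univ ×ˢ univ) (fun p => p.1 < p.2) f]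
  rw [← Finset.sum_filter_add_sum_filter_not
    ((univ ×ˢ univ).filter (fun p => ¬ p.1 < p.2)) (fun p => p.2 < p.1) f]
  have hdiag : ∑ p ∈ (((univ ×ˢ univ).filter (fun p : Fin n × Fin n => ¬ p.1 < p.2)).filter
      (fun p => ¬ p.2 < p.1)), f p = 0 := by
    refine Finset.sum_eq_zero fun p hp => ?_
    rw [Finset.mem_filter, Finset.mem_filter] at hp
    have : p.1 = p.2 := le_antisymm (not_lt.1 hp.2) (not_lt.1 hp.1.2)
    rw [hf]
    simp [this]
  have hswapset : (((univ ×ˢ univ).filter (fun p : Fin n × Fin n => ¬ p.1 < p.2)).filter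
      (fun p => p.2 < p.1))
      = (univ ×ˢ univ).filter (fun p : Fin n × Fin n => p.2 < p.1) := by
    rw [Finset.filter_filter]
    refine Finset.filter_congr fun p _ => ?_
    constructor
    · rintro ⟨-, h⟩; exact h
    · intro h; exact ⟨not_lt.2 h.le, h⟩
  rw [hswapset, hdiag, add_zero]
  have hswap : ∑ p ∈ (univ ×ˢ univ).filter (fun p : Fin n × Fin n => p.2 < p.1), f p
      = ∑ p ∈ (univ ×ˢ univ).filter (fun p : Fin n × Fin n => p.1 < p.2), f p.swap := by
    refine Finset.sum_nbij' Prod.swap Prod.swap ?_ ?_ ?_ ?_ ?_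
    · intro p hp
      rw [Finset.mem_filter] at hp ⊢
      exact ⟨by simp, hp.2⟩
    · intro p hp
      rw [Finset.mem_filter] at hp ⊢
      exact ⟨by simp, hp.2⟩
    · intro p _; simp
    · intro p _; simp
    · intro p _; rfl
  rw [hswap, ← Finset.sum_add_distrib]
  refine Finset.sum_congr rfl fun p hp => ?_
  rw [Finset.mem_filter] at hp
  obtain ⟨-, hlt⟩ := hp
  obtain ⟨i, j⟩ := p
  simp only at hlt
  have hij : i ≠ j := ne_of_lt hlt
  -- rewrite the four erase-es's in terms of R = (univ.erase i).erase j
  have hjmem : j ∈ (univ : Finset (Fin n)).erase i := Finset.mem_erase.2 ⟨hij.symm, Finset.mem_univ j⟩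
  have himem : i ∈ (univ : Finset (Fin n)).erase j := Finset.mem_erase.2 ⟨hij, Finset.mem_univ i⟩
  have e1 : ∀ c : ℤ, es ((univ : Finset (Fin n)).erase i) c
      = es ((univ.erase i).erase j) c + X j * es ((univ.erase i).erase j) (c - 1) :=
    fun c => es_erase hjmem c
  have e2 : ∀ c : ℤ, es ((univ : Finset (Fin n)).erase j) c
      = es ((univ.erase i).erase j) c + X i * es ((univ.erase i).erase j) (c - 1) := by
    intro c
    rw [es_erase himem c, Finset.erase_right_comm]
  rw [hf]
  simp only [Prod.swap, Prod.fst, Prod.snd]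
  rw [e1 (a-1), e1 b, e2 (a-1), e2 b]
  rw [show a - 1 - 1 = a - 2 from by ring]
  ring

theorem one_isSumSq : IsSumSq (1 : MvPolynomial (Fin n) ℝ) := by
  simpa using isSumSq_mul_self (1 : MvPolynomial (Fin n) ℝ)

theorem u_sos (S : Finset (Fin n)) : ∀ p q : ℤ, p ≤ q →
    IsSumSq (bind₁ (fun j : Fin n => (X j : MvPolynomial (Fin n) ℝ) ^ 2)
      (es S p * es S q - es S (p-1) * es S (q+1))) := by
  classical
  induction S using Finset.induction_on with
  | empty =>
    intro p q hpq
    by_cases hp : p = 0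
    · subst hp
      by_cases hq : q = 0
      · subst hq
        have : es (∅ : Finset (Fin n)) 0 * es ∅ 0 - es ∅ (0-1) * es ∅ (0+1) = 1 := by
          rw [es_zero, es_empty ((0:ℤ)-1) (by norm_num), es_empty ((0:ℤ)+1) (by norm_num)]
          ring
        rw [this, map_one]
        exact one_isSumSq
      · have : es (∅ : Finset (Fin n)) 0 * es ∅ q - es ∅ (0-1) * es ∅ (q+1) = 0 := by
          rw [es_empty q hq, es_empty ((0:ℤ)-1) (by norm_num)]
          ring
        rw [this, map_zero]
        exact IsSumSq.zero
    · have : es (∅ : Finset (Fin n)) p * es ∅ q - es ∅ (p-1) * es ∅ (q+1) = 0 := by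
        rw [es_empty p hp]
        by_cases hp1 : p = 1
        · subst hp1
          rw [es_empty (q+1) (by omega)]
          ring
        · rw [es_empty (p-1) (by omega)]
          ring
      rw [this, map_zero]
      exact IsSumSq.zero
  | @insert i S hi ih =>
    intro p q hpq
    have key : es (insert i S) p * es (insert i S) q
        - es (insert i S) (p-1) * es (insert i S) (q+1)
        = (es S p * es S q - es S (p-1) * es S (q+1))
          + X i * ((es S p * es S (q-1) - es S (p-1) * es S q)
              + (es S (p-1) * es S q - es S (p-2) * es S (q+1)))
          + X i ^ 2 * (es S (p-1) * es S (q-1) - es S (p-2) * es S q) := by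
      rw [es_insert hi p, es_insert hi q, es_insert hi (p-1), es_insert hi (q+1)]
      rw [show p - 1 - 1 = p - 2 from by ring, show q + 1 - 1 = q from by ring]
      ring
    rw [key]
    simp only [map_add, map_mul, map_pow, bind₁_X_right]
    refine IsSumSq.add (IsSumSq.add (ih p q hpq) ?_) ?_
    · refine (isSumSq_sq (X i)).mul' (IsSumSq.add ?_ ?_)
      · by_cases hpq' : p = q
        · subst hpq'
          have : es S p * es S (p-1) - es S (p-1) * es S p = 0 := by ring
          rw [this, map_zero]
          exact IsSumSq.zero
        · have h1 := ih p (q-1) (by omega)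
          rwa [show q - 1 + 1 = q from by ring] at h1
      · have h2 := ih (p-1) q (by omega)
        rwa [show p - 1 - 1 = p - 2 from by ring] at h2
    · have h3 := ih (p-1) (q-1) (by omega)
      rw [show p - 1 - 1 = p - 2 from by ring, show q - 1 + 1 = q from by ring] at h3
      exact ((isSumSq_sq (X i)).pow' 2).mul' h3

theorem esym'_eq (m : ℕ) : esym' n m = ((n.choose m : ℝ))⁻¹ • es (univ : Finset (Fin n)) (m : ℤ) := by
  rw [esym', es_ofNat]

theorem step_sos {a b : ℕ} (ha : 1 ≤ a) (hab : a ≤ b) (hbn : b + 1 ≤ n) :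
    IsSumSq (bind₁ (fun j : Fin n => (X j : MvPolynomial (Fin n) ℝ) ^ 2)
      (esym' n a * esym' n b - esym' n (a-1) * esym' n (b+1))) := by
  have hbn' : b ≤ n := by omega
  have han : a ≤ n := by omega
  set ν : ℝ := (n : ℝ) with hν
  set α : ℝ := (a : ℝ) with hα
  set β : ℝ := (b : ℝ) with hβ
  set CA : ℝ := (n.choose a : ℝ) with hCA
  set CB : ℝ := (n.choose b : ℝ) with hCB
  set CA' : ℝ := (n.choose (a-1) : ℝ) with hCA'
  set CB' : ℝ := (n.choose (b+1) : ℝ) with hCB'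
  have hCApos : (0:ℝ) < CA := by
    rw [hCA]; exact_mod_cast Nat.choose_pos han
  have hCBpos : (0:ℝ) < CB := by
    rw [hCB]; exact_mod_cast Nat.choose_pos hbn'
  have hCA'pos : (0:ℝ) < CA' := by
    rw [hCA']; exact_mod_cast Nat.choose_pos (by omega : a - 1 ≤ n)
  have hCB'pos : (0:ℝ) < CB' := by
    rw [hCB']; exact_mod_cast Nat.choose_pos hbn
  have hαpos : (0:ℝ) < α := by rw [hα]; exact_mod_cast ha
  have hνβpos : (0:ℝ) < ν - β := by
    rw [hν, hβ]
    have : (b:ℝ) < (n:ℝ) := by exact_mod_cast (by omega : b < n)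
    linarith
  -- the two binomial identities
  have idA : CA * α = CA' * (ν - α + 1) := by
    have h := Nat.choose_succ_right_eq n (a-1)
    rw [show a - 1 + 1 = a from by omega] at h
    have h' : (n.choose a : ℝ) * ((a:ℝ)) = (n.choose (a-1) : ℝ) * ((n - (a-1) : ℕ) : ℝ) := by
      exact_mod_cast congrArg (Nat.cast : ℕ → ℝ) h
    rw [Nat.cast_sub (by omega : a - 1 ≤ n), Nat.cast_sub (by omega : 1 ≤ a)] at h'
    rw [hCA, hα, hCA', hν]
    linear_combination h' 
  have idB : CB * (ν - β) = CB' * (β + 1) := by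
    have h := Nat.choose_succ_right_eq n b
    have h' : (n.choose (b+1) : ℝ) * ((b:ℝ) + 1) = (n.choose b : ℝ) * ((n - b : ℕ) : ℝ) := by
      exact_mod_cast congrArg (Nat.cast : ℕ → ℝ) h
    rw [Nat.cast_sub hbn'] at h'
    rw [hCB, hβ, hCB', hν]
    linear_combination -h' 
  -- scalar constant
  set c : ℝ := α * (ν - β) * CA * CB with hc
  have hcpos : (0:ℝ) < c := by positivity
  have claim1 : c⁻¹ * (α * (ν - β)) = (CA * CB)⁻¹ := by
    field_simp [hc]
    ring
  have hνα : (0:ℝ) < ν - α + 1 := by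
    have : (a:ℝ) ≤ (n:ℝ) := by exact_mod_cast han
    rw [hν, hα]; linarith
  have hβ1 : (0:ℝ) < β + 1 := by rw [hβ]; positivity
  have key2 : (CA' * CB') * ((ν - α + 1) * (β + 1)) = c := by
    rw [hc]
    linear_combination (-(CB' * (β + 1))) * idA - (CA * α) * idB
  have claim2 : c⁻¹ * ((ν - α + 1) * (β + 1)) = (CA' * CB')⁻¹ := by
    rw [← key2, mul_inv, mul_assoc, inv_mul_cancel₀ (by positivity), mul_one]
  -- cast facts for the int scalars in main_identity
  have cast1 : (((a : ℤ) * ((n:ℤ) - (b:ℤ)) : ℤ) : ℝ) = α * (ν - β) := by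
    push_cast [hα, hν, hβ]; ring
  have cast2 : ((((n:ℤ) - (a:ℤ) + 1) * ((b:ℤ) + 1) : ℤ) : ℝ) = (ν - α + 1) * (β + 1) := by
    push_cast [hα, hν, hβ]; ring
  -- turn int-cast multiplications into ℝ-smuls
  have castmul : ∀ (z : ℤ) (x : MvPolynomial (Fin n) ℝ),
      ((z : ℤ) : MvPolynomial (Fin n) ℝ) * x = ((z : ℝ)) • x := by
    intro z x
    rw [smul_eq_C_mul, map_intCast]
  have MI := main_identity (n := n) (a : ℤ) (b : ℤ)
  rw [castmul, castmul] at MI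
  rw [cast1, cast2] at MI
  -- normalized polynomial identity
  have hpoly : esym' n a * esym' n b - esym' n (a-1) * esym' n (b+1)
      = c⁻¹ • (((α * (ν - β)) • (es (univ : Finset (Fin n)) (a:ℤ) * es univ (b:ℤ)))
          - (((ν - α + 1) * (β + 1)) • (es (univ : Finset (Fin n)) ((a:ℤ)-1) * es univ ((b:ℤ)+1)))) := by
    rw [smul_sub, smul_smul, smul_smul, claim1, claim2]
    rw [esym'_eq, esym'_eq, esym'_eq, esym'_eq]
    rw [smul_mul_smul_comm, smul_mul_smul_comm]
    rw [← mul_inv, ← mul_inv]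
    rw [show ((a - 1 : ℕ) : ℤ) = (a:ℤ) - 1 from by omega]
    rw [show ((b + 1 : ℕ) : ℤ) = (b:ℤ) + 1 from by push_cast; ring]
  rw [hpoly, MI]
  rw [map_smul]
  refine isSumSq_smul_of_nonneg (by positivity) ?_
  rw [map_sum]
  refine IsSumSq.sum' _ _ fun p hp => ?_
  rw [map_mul, map_pow, map_sub, bind₁_X_right, bind₁_X_right]
  refine (isSumSq_sq _).mul' ?_
  have h := u_sos ((univ.erase p.1).erase p.2) ((a:ℤ)-1) ((b:ℤ)-1) (by omega)
  rw [show (a:ℤ) - 1 - 1 = (a:ℤ) - 2 from by ring, show (b:ℤ) - 1 + 1 = (b:ℤ) from by ring] at h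
  exact h

/-- Substituted normalized elementary symmetric polynomial. -/
noncomputable def FF (m : ℕ) : MvPolynomial (Fin n) ℝ :=
  bind₁ (fun j : Fin n => (X j : MvPolynomial (Fin n) ℝ) ^ 2) (esym' n m)

theorem FF_sos (m : ℕ) : IsSumSq (FF (n := n) m) := by
  rw [FF, esym', map_smul]
  refine isSumSq_smul_of_nonneg (by positivity) ?_
  rw [map_sum]
  refine IsSumSq.sum' _ _ fun T _ => ?_
  rw [map_prod]
  simp only [bind₁_X_right]
  rw [Finset.prod_pow]
  exact isSumSq_sq _

theorem FF_step {a b : ℕ} (ha : 1 ≤ a) (hab : a ≤ b) (hbn : b + 1 ≤ n) :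
    IsSumSq (FF (n := n) a * FF b - FF (a-1) * FF (b+1)) := by
  have h := step_sos (n := n) ha hab hbn
  rw [map_sub, map_mul, map_mul] at h
  exact h

theorem chainV : ∀ s r p : ℕ, r + s + 1 ≤ p → p ≤ n →
    IsSumSq (FF (n := n) (r+s) * FF (p-1) ^ s - FF p ^ s * FF r) := by
  intro s
  induction s with
  | zero =>
    intro r p _ _
    rw [pow_zero, pow_zero, mul_one, one_mul, Nat.add_zero, sub_self]
    exact IsSumSq.zero
  | succ s ih =>
    intro r p hs hpn
    have h1 := FF_step (n := n) (a := r+s+1) (b := p-1) (by omega) (by omega)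
      (by rw [show p-1+1 = p from by omega]; exact hpn)
    rw [show r+s+1-1 = r+s from by omega, show p-1+1 = p from by omega] at h1
    have h2 := ih r p (by omega) hpn
    have hid : FF (n := n) (r+(s+1)) * FF (p-1) ^ (s+1) - FF p ^ (s+1) * FF r
        = FF (p-1) ^ s * (FF (r+s+1) * FF (p-1) - FF (r+s) * FF p)
          + FF p * (FF (r+s) * FF (p-1) ^ s - FF p ^ s * FF r) := by
      rw [show r+(s+1) = r+s+1 from by omega]
      ring
    rw [hid]
    exact (((FF_sos (p-1)).pow' s).mul' h1).add ((FF_sos p).mul' h2)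

theorem mainT : ∀ k r q : ℕ, r ≤ q → q + k ≤ n →
    IsSumSq (FF (n := n) q ^ (q + k - r) - FF (q+k) ^ (q-r) * FF r ^ k) := by
  intro k
  induction k with
  | zero =>
    intro r q _ _
    rw [pow_zero, mul_one, Nat.add_zero, sub_self]
    exact IsSumSq.zero
  | succ k ih =>
    intro r q hrq hn
    have h2 := chainV (n := n) (q - r) r (q+k+1) (by omega) (by omega)
    rw [show r + (q-r) = q from by omega, show q+k+1-1 = q+k from by omega] at h2
    have h1 := ih r q hrq (by omega)
    have hid : FF (n := n) q ^ (q + (k+1) - r) - FF (q+(k+1)) ^ (q-r) * FF r ^ (k+1)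
        = FF q * (FF q ^ (q + k - r) - FF (q+k) ^ (q-r) * FF r ^ k)
          + FF r ^ k * (FF q * FF (q+k) ^ (q-r) - FF (q+k+1) ^ (q-r) * FF r) := by
      rw [show q+(k+1)-r = (q+k-r)+1 from by omega, show q+(k+1) = q+k+1 from by omega]
      ring
    rw [hid]
    exact ((FF_sos q).mul' h1).add (((FF_sos r).pow' k).mul' h2)

end ES

theorem maclaurin_lyapunov_sos (n p q r : ℕ) (hqp : q ≤ p) (hrq : r ≤ q) (hpn : p ≤ n) :
    IsSumSq (bind₁ (fun j : Fin n => (X j : MvPolynomial (Fin n) ℝ) ^ 2)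
      (esym' n q ^ (p - r) - esym' n p ^ (q - r) * esym' n r ^ (p - q))) := by
  rw [map_sub, map_mul, map_pow, map_pow, map_pow]
  have h := mainT (n := n) (p - q) r q hrq (by omega)
  rw [show q + (p - q) - r = p - r from by omega, show q + (p - q) = p from by omega] at h
  exact h
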